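/- Let N ≥ 2, and let π* be uniform over the N one-hot vectors in {0,1}^N. For any product distribution π_ind with parameters p₁,…,p_N ∈ (0,1), the KL divergence KL(π* ‖ π_ind) is at least -(N-1)·log(1 - 1/N), and hence at least 1 - 1/N > 0. -/

import Mathlib

open Finset

lemma stmt10_key (n : ℝ) (hn : 2 ≤ n) (x : ℝ) (hx : 0 < x) (hx1 : x < 1) :
    Real.log n - (n - 1) * Real.log (1 - 1/n) ≤ -Real.log x - (n - 1) * Real.log (1 - x) := by
  have hn0 : (0:ℝ) < n := by linarith
  have hn1 : (0:ℝ) < n - 1 := by linarith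
  have h1n : (0:ℝ) < 1 - 1/n := by
    rw [sub_pos, div_lt_one hn0]; linarith
  have h1 : Real.log (n*x) ≤ n*x - 1 := Real.log_le_sub_one_of_pos (by positivity)
  have h2 : Real.log ((1-x)/(1-1/n)) ≤ (1-x)/(1-1/n) - 1 :=
    Real.log_le_sub_one_of_pos (div_pos (by linarith) h1n)
  rw [Real.log_mul (ne_of_gt hn0) (ne_of_gt hx)] at h1
  rw [Real.log_div (by linarith) (ne_of_gt h1n)] at h2
  have he : (1-x)/(1-1/n) = n*(1-x)/(n-1) := by
    field_simp
  rw [he] at h2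
  have h2' : (n-1)*(Real.log (1-x) - Real.log (1-1/n)) ≤ n*(1-x) - (n-1) := by
    calc (n-1)*(Real.log (1-x) - Real.log (1-1/n)) ≤ (n-1)*(n*(1-x)/(n-1) - 1) :=
          mul_le_mul_of_nonneg_left h2 hn1.le
      _ = n*(1-x) - (n-1) := by field_simp
  nlinarith [h1, h2']

theorem stmt10 (N : ℕ) (hN : 2 ≤ N) (p : Fin N → ℝ)
    (hp : ∀ i, p i ∈ Set.Ioo (0:ℝ) 1) :
    -- KL(π* ‖ π_ind) where π* is uniform over the N one-hot vectors:
    -- only the one-hot atoms contribute, the j-th with mass 1/N and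
    -- product probability p j * ∏_{i ≠ j} (1 - p i).
    (∑ j : Fin N, (1 / (N:ℝ)) *
        Real.log ((1 / (N:ℝ)) / (p j * ∏ i ∈ Finset.univ.erase j, (1 - p i))))
      ≥ -((N:ℝ) - 1) * Real.log (1 - 1 / (N:ℝ)) ∧
    (∑ j : Fin N, (1 / (N:ℝ)) *
        Real.log ((1 / (N:ℝ)) / (p j * ∏ i ∈ Finset.univ.erase j, (1 - p i))))
      ≥ 1 - 1 / (N:ℝ) ∧
    (0:ℝ) < 1 - 1 / (N:ℝ) := by
  have hN2 : (2:ℝ) ≤ (N:ℝ) := by exact_mod_cast hN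
  have hN0 : (0:ℝ) < (N:ℝ) := by linarith
  have h1n : (0:ℝ) < 1 - 1/(N:ℝ) := by
    rw [sub_pos, div_lt_one hN0]; linarith
  have hpos : ∀ i : Fin N, 0 < p i := fun i => (hp i).1
  have hq : ∀ i : Fin N, 0 < 1 - p i := fun i => by linarith [(hp i).2]
  set L := Real.log (1 - 1/(N:ℝ)) with hL
  set A := ∑ i : Fin N, Real.log (p i) with hA
  set B := ∑ i : Fin N, Real.log (1 - p i) with hB
  have hrw : ∀ j : Fin N,
      Real.log ((1 / (N:ℝ)) / (p j * ∏ i ∈ Finset.univ.erase j, (1 - p i)))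
      = -Real.log N - Real.log (p j) - (B - Real.log (1 - p j)) := by
    intro j
    have hppos : 0 < ∏ i ∈ Finset.univ.erase j, (1 - p i) :=
      Finset.prod_pos fun i _ => hq i
    rw [Real.log_div (one_div_ne_zero hN0.ne') (mul_pos (hpos j) hppos).ne',
        Real.log_mul (hpos j).ne' hppos.ne',
        Real.log_prod (fun i _ => (hq i).ne'), one_div, Real.log_inv, hB,
        ← Finset.sum_erase_eq_sub (Finset.mem_univ j)]
    ring
  have hS : (∑ j : Fin N, (1 / (N:ℝ)) *
        Real.log ((1 / (N:ℝ)) / (p j * ∏ i ∈ Finset.univ.erase j, (1 - p i))))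
      = (1/(N:ℝ)) * (-(N:ℝ)*Real.log N - A - ((N:ℝ)-1) * B) := by
    simp_rw [hrw]
    rw [← Finset.mul_sum]
    congr 1
    rw [Finset.sum_sub_distrib, Finset.sum_sub_distrib, Finset.sum_sub_distrib,
        Finset.sum_const, Finset.card_univ, Fintype.card_fin, nsmul_eq_mul, ← hA, ← hB,
        Finset.sum_const, Finset.card_univ, Fintype.card_fin, nsmul_eq_mul]
    ring
  have hsumkey : (N:ℝ) * Real.log N - (N:ℝ)*((N:ℝ)-1)*L ≤ -A - ((N:ℝ)-1)*B := by
    have h : ∑ _i : Fin N, (Real.log (N:ℝ) - ((N:ℝ)-1)*L)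
        ≤ ∑ i : Fin N, (-Real.log (p i) - ((N:ℝ)-1)*Real.log (1 - p i)) :=
      Finset.sum_le_sum (fun i _ => stmt10_key (N:ℝ) hN2 (p i) (hpos i) (hp i).2)
    simp only [Finset.sum_const, Finset.card_univ, Fintype.card_fin, nsmul_eq_mul,
      Finset.sum_sub_distrib, Finset.sum_neg_distrib, ← Finset.mul_sum, ← hA, ← hB] at h
    linarith [h]
  have hfirst : (∑ j : Fin N, (1 / (N:ℝ)) *
        Real.log ((1 / (N:ℝ)) / (p j * ∏ i ∈ Finset.univ.erase j, (1 - p i))))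
      ≥ -((N:ℝ) - 1) * L := by
    rw [hS]
    have h1 : (1/(N:ℝ)) * (-(N:ℝ)*Real.log N - A - ((N:ℝ)-1) * B)
        ≥ (1/(N:ℝ)) * (-(N:ℝ)*Real.log N + ((N:ℝ) * Real.log N - (N:ℝ)*((N:ℝ)-1)*L)) := by
      apply mul_le_mul_of_nonneg_left _ (by positivity)
      linarith [hsumkey]
    have h2 : (1/(N:ℝ)) * (-(N:ℝ)*Real.log N + ((N:ℝ) * Real.log N - (N:ℝ)*((N:ℝ)-1)*L))
        = -((N:ℝ) - 1) * L := by
      field_simp; ring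
    linarith [h1, h2.symm.le]
  have hlog : L ≤ -(1/(N:ℝ)) := by
    have := Real.log_le_sub_one_of_pos h1n
    linarith
  have hsecond : -((N:ℝ) - 1) * L ≥ 1 - 1/(N:ℝ) := by
    have h3 : ((N:ℝ)-1) * (1/(N:ℝ)) = 1 - 1/(N:ℝ) := by field_simp
    nlinarith [hlog, hN2]
  exact ⟨hfirst, le_trans hsecond hfirst, h1n⟩
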